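/- Let K be a Markov kernel on ℝ such that K maps C₀(ℝ) into C₀(ℝ) and K maps bounded non-decreasing functions to bounded non-decreasing functions. Then for all a > 0: K(x, [−a, ∞)) → 0 as x → −∞, and K(x, (−∞, a]) → 0 as x → +∞. -/

import Mathlib

open MeasureTheory ProbabilityTheory ZeroAtInfty Filter

noncomputable def stmt10bump (c d : ℝ) : C₀(ℝ, ℝ) where
  toFun := fun y => max 0 (min (y - (c - 1)) (min 1 ((d + 1) - y)))
  continuous_toFun := continuous_const.max (((continuous_id.sub continuous_const).min (continuous_const.min (continuous_const.sub continuous_id))))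
  zero_at_infty' := by
    have h : ∀ᶠ y in cocompact ℝ,
        (fun y => max 0 (min (y - (c - 1)) (min 1 ((d + 1) - y)))) y = (0 : ℝ) := by
      refine Filter.mem_of_superset
        (Filter.mem_cocompact.2 ⟨Set.Icc (c - 1) (d + 1), isCompact_Icc, subset_rfl⟩) ?_
      intro y hy
      simp only [Set.mem_compl_iff, Set.mem_Icc, not_and_or, not_le] at hy
      rcases hy with h | h
      · exact max_eq_left (le_trans (min_le_left _ _) (by linarith))
      · exact max_eq_left
          (le_trans (le_trans (min_le_right _ _) (min_le_right _ _)) (by linarith))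
    exact Tendsto.congr' (by filter_upwards [h] with y hy using hy.symm) tendsto_const_nhds

lemma stmt10bump_nonneg (c d y : ℝ) : 0 ≤ stmt10bump c d y := le_max_left _ _

lemma stmt10bump_indicator_le (c d y : ℝ) :
    (Set.Icc c d).indicator (1 : ℝ → ℝ) y ≤ stmt10bump c d y := by
  by_cases hy : y ∈ Set.Icc c d
  · rw [Set.indicator_of_mem hy]
    obtain ⟨h1, h2⟩ := hy
    simp only [Pi.one_apply]
    refine le_trans ?_ (le_max_right _ _)
    exact le_min (by linarith) (le_min le_rfl (by linarith))
  · rw [Set.indicator_of_notMem hy]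
    exact stmt10bump_nonneg c d y

lemma stmt10bump_zero (c d y : ℝ) (hy : y ∉ Set.Icc (c - 1) (d + 1)) :
    stmt10bump c d y = 0 := by
  simp only [Set.mem_Icc, not_and_or, not_le] at hy
  rcases hy with h | h
  · exact max_eq_left (le_trans (min_le_left _ _) (by linarith))
  · exact max_eq_left
      (le_trans (le_trans (min_le_right _ _) (min_le_right _ _)) (by linarith))

lemma stmt10bump_compactSupport (c d : ℝ) : HasCompactSupport (stmt10bump c d) :=
  HasCompactSupport.intro isCompact_Icc (fun y hy => stmt10bump_zero c d y hy)

lemma stmt10_indicator_mono_Ici (b : ℝ) :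
    Monotone ((Set.Ici b).indicator (1 : ℝ → ℝ)) := by
  intro u v huv
  simp only [Set.indicator_apply, Set.mem_Ici, Pi.one_apply]
  split_ifs with h1 h2
  · exact le_rfl
  · exact absurd (le_trans h1 huv) h2
  · exact zero_le_one
  · exact le_rfl

lemma stmt10_indicator_mono_Ioi (b : ℝ) :
    Monotone ((Set.Ioi b).indicator (1 : ℝ → ℝ)) := by
  intro u v huv
  simp only [Set.indicator_apply, Set.mem_Ioi, Pi.one_apply]
  split_ifs with h1 h2
  · exact le_rfl
  · exact absurd (lt_of_lt_of_le h1 huv) h2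
  · exact zero_le_one
  · exact le_rfl

/-- Let `K` be a Markov kernel on `ℝ` that maps `C₀(ℝ)` into `C₀(ℝ)` and maps bounded
non-decreasing Borel functions to non-decreasing functions. Then for every `a > 0`,
`K(x, [−a,∞)) → 0` as `x → −∞` and `K(x, (−∞,a]) → 0` as `x → +∞`. -/
theorem stmt10 (κ : Kernel ℝ ℝ) [IsMarkovKernel κ]
    (hC0 : ∀ f : C₀(ℝ, ℝ), Continuous (fun x => ∫ y, f y ∂(κ x)) ∧
      Tendsto (fun x => ∫ y, f y ∂(κ x)) (cocompact ℝ) (nhds 0))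
    (hmono : ∀ f : ℝ → ℝ, Measurable f → Monotone f → (∃ M, ∀ x, |f x| ≤ M) →
      Monotone (fun x => ∫ y, f y ∂(κ x))) :
    ∀ a > (0:ℝ),
      Tendsto (fun x => (κ x (Set.Ici (-a))).toReal) atBot (nhds 0) ∧
      Tendsto (fun x => (κ x (Set.Iic a)).toReal) atTop (nhds 0) := by
  -- monotonicity of x ↦ κ x (Ici b) and κ x (Ioi b)
  have hIci : ∀ b : ℝ, Monotone (fun x => (κ x (Set.Ici b)).toReal) := by
    intro b
    have h := hmono ((Set.Ici b).indicator (1 : ℝ → ℝ))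
      (measurable_one.indicator measurableSet_Ici) (stmt10_indicator_mono_Ici b)
      ⟨1, fun y => by
        simp only [Set.indicator_apply, Pi.one_apply]
        split_ifs <;> simp⟩
    have heq : ∀ x : ℝ, (∫ y, (Set.Ici b).indicator (1 : ℝ → ℝ) y ∂(κ x))
        = (κ x (Set.Ici b)).toReal := fun x => integral_indicator_one measurableSet_Ici
    intro u v huv
    have := h huv
    simpa only [heq] using this
  have hIoi : ∀ b : ℝ, Monotone (fun x => (κ x (Set.Ioi b)).toReal) := by
    intro b
    have h := hmono ((Set.Ioi b).indicator (1 : ℝ → ℝ))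
      (measurable_one.indicator measurableSet_Ioi) (stmt10_indicator_mono_Ioi b)
      ⟨1, fun y => by
        simp only [Set.indicator_apply, Pi.one_apply]
        split_ifs <;> simp⟩
    have heq : ∀ x : ℝ, (∫ y, (Set.Ioi b).indicator (1 : ℝ → ℝ) y ∂(κ x))
        = (κ x (Set.Ioi b)).toReal := fun x => integral_indicator_one measurableSet_Ioi
    intro u v huv
    have := h huv
    simpa only [heq] using this
  -- mass of compact intervals vanishes at infinity
  have hcomp : ∀ c d : ℝ, Tendsto (fun x => (κ x (Set.Icc c d)).toReal)
      (cocompact ℝ) (nhds 0) := by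
    intro c d
    have h0 : ∀ x : ℝ, 0 ≤ (κ x (Set.Icc c d)).toReal := fun x => ENNReal.toReal_nonneg
    have hle : ∀ x : ℝ, (κ x (Set.Icc c d)).toReal ≤ ∫ y, stmt10bump c d y ∂(κ x) := by
      intro x
      rw [← measureReal_def, ← integral_indicator_one (μ := κ x) measurableSet_Icc]
      refine integral_mono ?_ ?_ (fun y => stmt10bump_indicator_le c d y)
      · exact (integrable_const (1 : ℝ)).indicator measurableSet_Icc
      · exact (stmt10bump c d).continuous.integrable_of_hasCompactSupport
          (stmt10bump_compactSupport c d)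
    exact squeeze_zero h0 hle (hC0 (stmt10bump c d)).2
  -- split of total mass
  have hsplit : ∀ (x b : ℝ), (κ x (Set.Iic b)).toReal + (κ x (Set.Ioi b)).toReal = 1 := by
    intro x b
    rw [← ENNReal.toReal_add (measure_ne_top _ _) (measure_ne_top _ _),
      ← measure_union (by simp [Set.disjoint_left]) measurableSet_Ioi]
    rw [Set.Iic_union_Ioi, measure_univ, ENNReal.toReal_one]
  have hIic_anti : ∀ b : ℝ, Antitone (fun x => (κ x (Set.Iic b)).toReal) := by
    intro b u v huv
    have h1 := hIoi b huv
    have h2 := hsplit u b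
    have h3 := hsplit v b
    simp only at h1 ⊢
    linarith
  intro a ha
  constructor
  · -- x → -∞
    rw [Metric.tendsto_nhds]
    intro ε hε
    rw [eventually_atBot]
    by_contra hcon
    push_neg at hcon
    have hall : ∀ x : ℝ, ε ≤ (κ x (Set.Ici (-a))).toReal := by
      intro x
      obtain ⟨n, hn, hd⟩ := hcon x
      rw [Real.dist_eq, sub_zero, abs_of_nonneg ENNReal.toReal_nonneg] at hd
      exact le_trans hd (hIci (-a) hn)
    have hb : ∀ b : ℝ, ε / 2 ≤ (κ 0 (Set.Ici b)).toReal := by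
      intro b
      set b' := max b (-a) with hb'
      have hba : -a ≤ b' := le_max_right _ _
      have hbb : b ≤ b' := le_max_left _ _
      -- find x₀ ≤ 0 where the compact part is small
      have htb : Tendsto (fun x => (κ x (Set.Icc (-a) b')).toReal) atBot (nhds 0) :=
        (hcomp (-a) b').mono_left (by rw [cocompact_eq_atBot_atTop]; exact le_sup_left)
      have hev : ∀ᶠ x in atBot, (κ x (Set.Icc (-a) b')).toReal < ε / 2 := by
        have := (Metric.tendsto_nhds.1 htb) (ε / 2) (by linarith)
        filter_upwards [this] with x hx
        rw [Real.dist_eq, sub_zero, abs_of_nonneg ENNReal.toReal_nonneg] at hx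
        exact hx
      obtain ⟨x₀, hx₀le, hx₀⟩ := ((eventually_le_atBot (0 : ℝ)).and hev).exists
      -- Ici (-a) ⊆ Icc (-a) b' ∪ Ioi b'
      have hsub : Set.Ici (-a) ⊆ Set.Icc (-a) b' ∪ Set.Ioi b' := by
        intro y hy
        rcases le_or_gt y b' with h | h
        · exact Or.inl ⟨hy, h⟩
        · exact Or.inr h
      have hle : (κ x₀ (Set.Ici (-a))).toReal
          ≤ (κ x₀ (Set.Icc (-a) b')).toReal + (κ x₀ (Set.Ioi b')).toReal := by
        rw [← ENNReal.toReal_add (measure_ne_top _ _) (measure_ne_top _ _)]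
        exact ENNReal.toReal_mono
          (ENNReal.add_ne_top.2 ⟨measure_ne_top _ _, measure_ne_top _ _⟩)
          (le_trans (measure_mono hsub) (measure_union_le _ _))
      have h1 : ε / 2 ≤ (κ x₀ (Set.Ioi b')).toReal := by
        have := hall x₀
        linarith
      have h2 : (κ x₀ (Set.Ioi b')).toReal ≤ (κ 0 (Set.Ioi b')).toReal := hIoi b' hx₀le
      have h3 : (κ 0 (Set.Ioi b')).toReal ≤ (κ 0 (Set.Ici b)).toReal :=
        ENNReal.toReal_mono (measure_ne_top _ _)
          (measure_mono (fun y hy => le_of_lt (lt_of_le_of_lt hbb hy)))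
      linarith
    -- contradiction: κ 0 (Ici n) → 0
    have hinter : (⋂ n : ℕ, Set.Ici (n : ℝ)) = ∅ := by
      ext y
      simp only [Set.mem_iInter, Set.mem_Ici, Set.mem_empty_iff_false, iff_false, not_forall]
      obtain ⟨n, hn⟩ := exists_nat_gt y
      exact ⟨n, not_le.2 hn⟩
    have htends : Tendsto (fun n : ℕ => κ 0 (Set.Ici (n : ℝ))) atTop (nhds 0) := by
      have := tendsto_measure_iInter_atTop (μ := κ 0) (s := fun n : ℕ => Set.Ici (n : ℝ))
        (fun n => measurableSet_Ici.nullMeasurableSet)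
        (fun m n hmn => Set.Ici_subset_Ici.2 (Nat.cast_le.2 hmn))
        ⟨0, measure_ne_top _ _⟩
      rw [hinter] at this
      simpa [Function.comp_def] using this
    have htends' : Tendsto (fun n : ℕ => (κ 0 (Set.Ici (n : ℝ))).toReal) atTop (nhds 0) := by
      have := (ENNReal.tendsto_toReal (by simp)).comp htends
      simpa [Function.comp_def] using this
    have : ε / 2 ≤ 0 := ge_of_tendsto' htends' (fun n => hb (n : ℝ))
    linarith
  · -- x → +∞
    rw [Metric.tendsto_nhds]
    intro ε hε
    rw [eventually_atTop]
    by_contra hcon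
    push_neg at hcon
    have hall : ∀ x : ℝ, ε ≤ (κ x (Set.Iic a)).toReal := by
      intro x
      obtain ⟨n, hn, hd⟩ := hcon x
      rw [Real.dist_eq, sub_zero, abs_of_nonneg ENNReal.toReal_nonneg] at hd
      exact le_trans hd (hIic_anti a hn)
    have hb : ∀ b : ℝ, ε / 2 ≤ (κ 0 (Set.Iic b)).toReal := by
      intro b
      set b' := min b a with hb'
      have hba : b' ≤ a := min_le_right _ _
      have hbb : b' ≤ b := min_le_left _ _
      have htb : Tendsto (fun x => (κ x (Set.Icc b' a)).toReal) atTop (nhds 0) :=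
        (hcomp b' a).mono_left (by rw [cocompact_eq_atBot_atTop]; exact le_sup_right)
      have hev : ∀ᶠ x in atTop, (κ x (Set.Icc b' a)).toReal < ε / 2 := by
        have := (Metric.tendsto_nhds.1 htb) (ε / 2) (by linarith)
        filter_upwards [this] with x hx
        rw [Real.dist_eq, sub_zero, abs_of_nonneg ENNReal.toReal_nonneg] at hx
        exact hx
      obtain ⟨x₀, hx₀le, hx₀⟩ := ((eventually_ge_atTop (0 : ℝ)).and hev).exists
      have hsub : Set.Iic a ⊆ Set.Iic b' ∪ Set.Icc b' a := by
        intro y hy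
        rcases le_or_gt y b' with h | h
        · exact Or.inl h
        · exact Or.inr ⟨le_of_lt h, hy⟩
      have hle : (κ x₀ (Set.Iic a)).toReal
          ≤ (κ x₀ (Set.Iic b')).toReal + (κ x₀ (Set.Icc b' a)).toReal := by
        rw [← ENNReal.toReal_add (measure_ne_top _ _) (measure_ne_top _ _)]
        exact ENNReal.toReal_mono
          (ENNReal.add_ne_top.2 ⟨measure_ne_top _ _, measure_ne_top _ _⟩)
          (le_trans (measure_mono hsub) (measure_union_le _ _))
      have h1 : ε / 2 ≤ (κ x₀ (Set.Iic b')).toReal := by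
        have := hall x₀
        linarith
      have h2 : (κ x₀ (Set.Iic b')).toReal ≤ (κ 0 (Set.Iic b')).toReal := hIic_anti b' hx₀le
      have h3 : (κ 0 (Set.Iic b')).toReal ≤ (κ 0 (Set.Iic b)).toReal :=
        ENNReal.toReal_mono (measure_ne_top _ _)
          (measure_mono (Set.Iic_subset_Iic.2 hbb))
      linarith
    have hinter : (⋂ n : ℕ, Set.Iic (-(n : ℝ))) = ∅ := by
      ext y
      simp only [Set.mem_iInter, Set.mem_Iic, Set.mem_empty_iff_false, iff_false, not_forall]
      obtain ⟨n, hn⟩ := exists_nat_gt (-y)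
      exact ⟨n, not_le.2 (by linarith)⟩
    have htends : Tendsto (fun n : ℕ => κ 0 (Set.Iic (-(n : ℝ)))) atTop (nhds 0) := by
      have := tendsto_measure_iInter_atTop (μ := κ 0) (s := fun n : ℕ => Set.Iic (-(n : ℝ)))
        (fun n => measurableSet_Iic.nullMeasurableSet)
        (fun m n hmn => Set.Iic_subset_Iic.2 (by simp [Nat.cast_le.2 hmn, neg_le_neg]))
        ⟨0, measure_ne_top _ _⟩
      rw [hinter] at this
      simpa [Function.comp_def] using this
    have htends' : Tendsto (fun n : ℕ => (κ 0 (Set.Iic (-(n : ℝ)))).toReal) atTop (nhds 0) := by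
      have := (ENNReal.tendsto_toReal (by simp)).comp htends
      simpa [Function.comp_def] using this
    have : ε / 2 ≤ 0 := ge_of_tendsto' htends' (fun n => hb (-(n : ℝ)))
    linarith
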